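/- Let E ⊆ ℂ be a compact set, let s > 0, and let c > 0, C₁ > 0 be constants. Suppose that for every δ > 0 there exists a finite family 𝒢 of closed balls in ℂ with positive radii such that: every ball in 𝒢 has radius at most δ; the balls in 𝒢 are pairwise disjoint; every ball in 𝒢 has nonempty intersection with E; the sum over B ∈ 𝒢 of r(B)^s is at least c, where r(B) is the radius of B; and for every z ∈ ℂ and every ρ > 0, the sum of r(B)^s over those B ∈ 𝒢 contained in the closed ball of center z and radius ρ is at most C₁·ρ^s. Then the s-dimensional Hausdorff measure of E is strictly positive: μH[s](E) > 0. -/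

import Mathlib

open Metric MeasureTheory Set
open scoped ENNReal NNReal


open scoped Classical in
lemma stmt12_aux (E : Set ℂ) (hE : IsCompact E) (s : ℝ) (hs : 0 < s)
    (c C₁ : ℝ) (hc : 0 < c) (hC₁ : 0 < C₁)
    (hfam : ∀ δ : ℝ, 0 < δ →
      ∃ (n : ℕ) (z : Fin n → ℂ) (r : Fin n → ℝ),
        (∀ i, 0 < r i) ∧
        (∀ i, r i ≤ δ) ∧
        (Pairwise fun i j => Disjoint (closedBall (z i) (r i)) (closedBall (z j) (r j))) ∧
        (∀ i, (closedBall (z i) (r i) ∩ E).Nonempty) ∧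
        c ≤ ∑ i, r i ^ s ∧
        (∀ (w : ℂ) (ρ : ℝ), 0 < ρ →
          ∑ i ∈ Finset.univ.filter (fun i => closedBall (z i) (r i) ⊆ closedBall w ρ),
            r i ^ s ≤ C₁ * ρ ^ s))
    (t : ℕ → Set ℂ) (ht : E ⊆ ⋃ n, t n)
    (hd : ∀ n, (t n).Nonempty → EMetric.diam (t n) ≠ ⊤)
    (ε : ℝ) (hε : 0 < ε) :
    ∃ J : Finset ℕ, c / C₁ - ε ≤ ∑ j ∈ J, Metric.diam (t j) ^ s := by
  set a : ℕ → ℝ := fun n => Metric.diam (t n) with ha_def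
  have ha : ∀ n, 0 ≤ a n := fun n => diam_nonneg
  -- choose perturbations
  have hη : ∀ n : ℕ, ∃ η : ℝ, 0 < η ∧ (a n + η) ^ s ≤ a n ^ s + ε * (1/2) ^ (n+1) := by
    intro n
    have hcont : ContinuousAt (fun x : ℝ => x ^ s) (a n) :=
      Real.continuousAt_rpow_const _ _ (Or.inr hs.le)
    have hpos : (0:ℝ) < ε * (1/2) ^ (n+1) := by positivity
    obtain ⟨δ, hδ, h⟩ := Metric.continuousAt_iff.mp hcont _ hpos
    refine ⟨δ/2, by linarith, ?_⟩
    have := h (x := a n + δ/2) (by simp [Real.dist_eq]; rw [abs_of_nonneg] <;> linarith)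
    rw [Real.dist_eq] at this
    have := abs_lt.mp this
    linarith [this.1, this.2]
  choose η hη0 hηs using hη
  -- open cover by thickenings
  have hcover : E ⊆ ⋃ n, Metric.thickening (η n / 4) (t n) :=
    ht.trans (iUnion_mono fun n => Metric.self_subset_thickening (by linarith [hη0 n]) _)
  obtain ⟨J, hJ⟩ := hE.elim_finite_subcover (fun n => Metric.thickening (η n / 4) (t n))
    (fun n => Metric.isOpen_thickening) hcover
  refine ⟨J, ?_⟩
  -- a positive scale δ below all η j / 4, j ∈ J
  set S : Finset ℝ := insert 1 (J.image fun n => η n / 4) with hS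
  have hSne : S.Nonempty := ⟨1, Finset.mem_insert_self _ _⟩
  set δ : ℝ := S.min' hSne with hδdef
  have hδpos : 0 < δ := by
    rw [hδdef, Finset.lt_min'_iff]
    intro y hy
    rcases Finset.mem_insert.mp hy with h | h
    · simp [h]
    · obtain ⟨j, -, rfl⟩ := Finset.mem_image.mp h
      linarith [hη0 j]
  have hδj : ∀ j ∈ J, δ ≤ η j / 4 := fun j hj =>
    Finset.min'_le _ _ (Finset.mem_insert_of_mem (Finset.mem_image_of_mem _ hj))
  obtain ⟨n, z, r, hr0, hrδ, hdisj, hmeet, hsum, hpack⟩ := hfam δ hδpos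
  -- assign each ball to a member of J
  choose x hx using hmeet
  have hxE : ∀ i, x i ∈ ⋃ j ∈ J, Metric.thickening (η j / 4) (t j) := fun i => hJ (hx i).2
  have h2 : ∀ i, ∃ j ∈ J, ∃ y ∈ t j, dist (x i) y < η j / 4 := by
    intro i
    obtain ⟨j, hj, hmem⟩ := mem_iUnion₂.mp (hxE i)
    exact ⟨j, hj, Metric.mem_thickening_iff.mp hmem⟩
  choose g hgJ y hyt hxy using h2
  -- pick a basepoint in each t j
  have hw : ∀ i : Fin n, (t (g i)).Nonempty := fun i => ⟨y i, hyt i⟩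
  set w : ℕ → ℂ := fun j => if h : (t j).Nonempty then h.choose else 0 with hw_def
  have hwmem : ∀ j, (t j).Nonempty → w j ∈ t j := by
    intro j h; simp only [hw_def, dif_pos h]; exact h.choose_spec
  -- balls assigned to j are inside closedBall (w j) (a j + η j)
  have hsub : ∀ i, closedBall (z i) (r i) ⊆ closedBall (w (g i)) (a (g i) + η (g i)) := by
    intro i u hu
    have hb : Bornology.IsBounded (t (g i)) :=
      Metric.isBounded_iff_ediam_ne_top.mpr (hd _ (hw i))
    have h4 : dist (y i) (w (g i)) ≤ a (g i) :=
      Metric.dist_le_diam_of_mem hb (hyt i) (hwmem _ (hw i))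
    have h1 : dist u (z i) ≤ r i := mem_closedBall.mp hu
    have h2' : dist (z i) (x i) ≤ r i := by
      have := (hx i).1; rw [mem_closedBall] at this; rwa [dist_comm]
    have h3 : dist (x i) (y i) < η (g i) / 4 := hxy i
    have hδg : δ ≤ η (g i) / 4 := hδj _ (hgJ i)
    have hri : r i ≤ δ := hrδ i
    have htri : dist u (w (g i)) ≤ dist u (z i) + dist (z i) (x i) + dist (x i) (y i)
        + dist (y i) (w (g i)) := by
      calc dist u (w (g i)) ≤ dist u (y i) + dist (y i) (w (g i)) := dist_triangle _ _ _
        _ ≤ (dist u (z i) + dist (z i) (x i) + dist (x i) (y i)) + dist (y i) (w (g i)) := by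
            gcongr; exact dist_triangle4 _ _ _ _
    rw [mem_closedBall]
    linarith
  -- packing bound
  have hkey : c ≤ ∑ j ∈ J, C₁ * (a j + η j) ^ s := by
    calc c ≤ ∑ i, r i ^ s := hsum
      _ = ∑ j ∈ J, ∑ i ∈ Finset.univ.filter (fun i => g i = j), r i ^ s :=
          (Finset.sum_fiberwise_of_maps_to (fun i _ => hgJ i) _).symm
      _ ≤ ∑ j ∈ J, C₁ * (a j + η j) ^ s := by
          refine Finset.sum_le_sum fun j hj => ?_
          have hsubset : Finset.univ.filter (fun i => g i = j) ⊆
              Finset.univ.filter (fun i => closedBall (z i) (r i) ⊆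
                closedBall (w j) (a j + η j)) := by
            intro i hi
            simp only [Finset.mem_filter, Finset.mem_univ, true_and] at hi ⊢
            rw [← hi]; exact hsub i
          calc ∑ i ∈ Finset.univ.filter (fun i => g i = j), r i ^ s
              ≤ ∑ i ∈ Finset.univ.filter (fun i => closedBall (z i) (r i) ⊆
                  closedBall (w j) (a j + η j)), r i ^ s :=
                Finset.sum_le_sum_of_subset_of_nonneg hsubset
                  (fun i _ _ => Real.rpow_nonneg (hr0 i).le s)
            _ ≤ C₁ * (a j + η j) ^ s := hpack _ _ (by linarith [ha j, hη0 j])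
  -- conclude
  have hgeo : ∑ j ∈ J, ε * (1/2:ℝ) ^ (j+1) ≤ ε := by
    have hsummable : Summable (fun j : ℕ => ε * (1/2:ℝ) ^ (j+1)) := by
      apply Summable.mul_left
      exact (summable_geometric_of_lt_one (by norm_num) (by norm_num)).comp_injective
        (add_left_injective 1) |>.congr (fun n => rfl)
    have htsum : ∑' j : ℕ, ε * (1/2:ℝ) ^ (j+1) = ε := by
      have : ∑' j : ℕ, ε * (1/2:ℝ) ^ (j+1) = ∑' j : ℕ, (ε * (1/2)) * (1/2:ℝ) ^ j := by
        congr 1; ext j; ring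
      rw [this, tsum_mul_left, tsum_geometric_of_lt_one (by norm_num) (by norm_num)]
      ring
    calc ∑ j ∈ J, ε * (1/2:ℝ) ^ (j+1) ≤ ∑' j : ℕ, ε * (1/2:ℝ) ^ (j+1) :=
          Summable.sum_le_tsum J (fun j _ => by positivity) hsummable
      _ = ε := htsum
  have hstep : ∑ j ∈ J, C₁ * (a j + η j) ^ s ≤ C₁ * (∑ j ∈ J, a j ^ s + ε) := by
    rw [← Finset.mul_sum, mul_le_mul_iff_right₀ hC₁]
    calc ∑ j ∈ J, (a j + η j) ^ s ≤ ∑ j ∈ J, (a j ^ s + ε * (1/2) ^ (j+1)) :=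
          Finset.sum_le_sum fun j _ => hηs j
      _ = ∑ j ∈ J, a j ^ s + ∑ j ∈ J, ε * (1/2:ℝ) ^ (j+1) := Finset.sum_add_distrib
      _ ≤ ∑ j ∈ J, a j ^ s + ε := by linarith
  have : c ≤ C₁ * (∑ j ∈ J, a j ^ s + ε) := hkey.trans hstep
  have := (div_le_iff₀' hC₁).mpr this
  linarith [this]

open scoped Classical in
lemma stmt12_key (E : Set ℂ) (hE : IsCompact E) (s : ℝ) (hs : 0 < s)
    (c C₁ : ℝ) (hc : 0 < c) (hC₁ : 0 < C₁)
    (hfam : ∀ δ : ℝ, 0 < δ →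
      ∃ (n : ℕ) (z : Fin n → ℂ) (r : Fin n → ℝ),
        (∀ i, 0 < r i) ∧
        (∀ i, r i ≤ δ) ∧
        (Pairwise fun i j => Disjoint (closedBall (z i) (r i)) (closedBall (z j) (r j))) ∧
        (∀ i, (closedBall (z i) (r i) ∩ E).Nonempty) ∧
        c ≤ ∑ i, r i ^ s ∧
        (∀ (w : ℂ) (ρ : ℝ), 0 < ρ →
          ∑ i ∈ Finset.univ.filter (fun i => closedBall (z i) (r i) ⊆ closedBall w ρ),
            r i ^ s ≤ C₁ * ρ ^ s))
    (t : ℕ → Set ℂ) (ht : E ⊆ ⋃ n, t n) :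
    ENNReal.ofReal (c / C₁) ≤ ∑' n, ⨆ _ : (t n).Nonempty, EMetric.diam (t n) ^ s := by
  apply ENNReal.le_of_forall_pos_le_add
  intro ε hε hfin
  have hterm : ∀ m, (⨆ _ : (t m).Nonempty, EMetric.diam (t m) ^ s) ≠ ⊤ :=
    fun m => ne_top_of_le_ne_top hfin.ne (ENNReal.le_tsum m)
  have hd : ∀ m, (t m).Nonempty → EMetric.diam (t m) ≠ ⊤ := by
    intro m hm hcon
    apply hterm m
    simp only [hm, ciSup_unique, hcon]
    exact ENNReal.top_rpow_of_pos hs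
  have hεR : (0:ℝ) < (ε:ℝ) := hε
  obtain ⟨J, hJ⟩ := stmt12_aux E hE s hs c C₁ hc hC₁ hfam t ht hd (ε:ℝ) hεR
  have hstep1 : ENNReal.ofReal (c / C₁ - (ε:ℝ)) ≤
      ∑' m, ⨆ _ : (t m).Nonempty, EMetric.diam (t m) ^ s := by
    calc ENNReal.ofReal (c / C₁ - (ε:ℝ))
        ≤ ENNReal.ofReal (∑ j ∈ J, Metric.diam (t j) ^ s) := ENNReal.ofReal_le_ofReal hJ
      _ = ∑ j ∈ J, ENNReal.ofReal (Metric.diam (t j) ^ s) :=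
          ENNReal.ofReal_sum_of_nonneg (fun j _ => Real.rpow_nonneg diam_nonneg s)
      _ ≤ ∑ j ∈ J, ⨆ _ : (t j).Nonempty, EMetric.diam (t j) ^ s := by
          refine Finset.sum_le_sum fun j _ => ?_
          rcases eq_empty_or_nonempty (t j) with h | h
          · simp [h, Real.zero_rpow hs.ne']
          · simp only [h, ciSup_unique]
            rw [← ENNReal.ofReal_rpow_of_nonneg diam_nonneg hs.le]
            have : ENNReal.ofReal (Metric.diam (t j)) = EMetric.diam (t j) := by
              rw [Metric.diam]; exact ENNReal.ofReal_toReal (hd j h)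
            rw [this]
      _ ≤ ∑' m, ⨆ _ : (t m).Nonempty, EMetric.diam (t m) ^ s := ENNReal.sum_le_tsum J
  calc ENNReal.ofReal (c / C₁) = ENNReal.ofReal ((c / C₁ - (ε:ℝ)) + (ε:ℝ)) := by ring_nf
    _ ≤ ENNReal.ofReal (c / C₁ - (ε:ℝ)) + ENNReal.ofReal (ε:ℝ) := ENNReal.ofReal_add_le
    _ ≤ (∑' m, ⨆ _ : (t m).Nonempty, EMetric.diam (t m) ^ s) + ↑ε :=
        add_le_add hstep1 (le_of_eq ENNReal.ofReal_coe_nnreal)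


open scoped Classical in
/-- A packing criterion for positivity of Hausdorff measure: if a compact set `E ⊆ ℂ` admits,
at every scale `δ > 0`, a finite family of pairwise disjoint closed balls of radii `≤ δ`
meeting `E`, whose radii satisfy `∑ r(B)^s ≥ c` together with the Carleson packing condition
`∑_{B ⊆ closedBall z ρ} r(B)^s ≤ C₁·ρ^s`, then `μH[s](E) > 0`. -/
theorem stmt12 (E : Set ℂ) (hE : IsCompact E) (s : ℝ) (hs : 0 < s)
    (c C₁ : ℝ) (hc : 0 < c) (hC₁ : 0 < C₁)
    (hfam : ∀ δ : ℝ, 0 < δ →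
      ∃ (n : ℕ) (z : Fin n → ℂ) (r : Fin n → ℝ),
        (∀ i, 0 < r i) ∧
        (∀ i, r i ≤ δ) ∧
        (Pairwise fun i j => Disjoint (closedBall (z i) (r i)) (closedBall (z j) (r j))) ∧
        (∀ i, (closedBall (z i) (r i) ∩ E).Nonempty) ∧
        c ≤ ∑ i, r i ^ s ∧
        (∀ (w : ℂ) (ρ : ℝ), 0 < ρ →
          ∑ i ∈ Finset.univ.filter (fun i => closedBall (z i) (r i) ⊆ closedBall w ρ),
            r i ^ s ≤ C₁ * ρ ^ s)) :
    0 < μH[s] E := by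
  have hlb : ENNReal.ofReal (c / C₁) ≤ μH[s] E := by
    rw [MeasureTheory.Measure.hausdorffMeasure_apply]
    refine le_trans ?_ (le_iSup₂ (1 : ℝ≥0∞) one_pos)
    refine le_iInf fun t => le_iInf fun ht => le_iInf fun _ =>
      stmt12_key E hE s hs c C₁ hc hC₁ hfam t ht
  exact lt_of_lt_of_le (ENNReal.ofReal_pos.mpr (div_pos hc hC₁)) hlb
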